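/- The Maximum Weight-Budget Ratio First heuristic has unbounded approximation ratio on (d+1)-claw free graphs: for every natural number M, consider K_{1,d} where the center has weight 1 and budget 1, each leaf has weight M/d and budget M, and B = dM. The greedy heuristic that picks the vertex of maximum weight-to-budget ratio first selects the center and returns weight 1, while the optimal B-budgeted independent set (all d leaves) has weight M. -/

import Mathlib

/-- `S` is an independent set in `G`: no two vertices of `S` are adjacent. -/
def SimpleGraph.IsIndepSet' {V : Type*} (G : SimpleGraph V) (S : Set V) : Prop :=
  ∀ u ∈ S, ∀ v ∈ S, ¬ G.Adj u v

attribute [local instance] Classical.propDecidable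

/-- The greedy budgeted independent-set algorithm: process vertices in the given
order; stop as soon as the remaining budget is smaller than the budget of the
current vertex; otherwise select the current vertex if it is non-adjacent to all
previously selected vertices, spending its budget. Returns the selected vertices
in order of selection. (With the vertex list sorted in non-decreasing order of
budget this is the Minimum Budget First (MBF) algorithm.) -/
noncomputable def mbf {V : Type*} (G : SimpleGraph V) (b : V → ℕ) :
    List V → List V → ℕ → List V
  | [], A, _ => A
  | v :: rest, A, rem =>
    if rem < b v then A
    else if ∀ u ∈ A, ¬ G.Adj v u then mbf G b rest (A ++ [v]) (rem - b v)
    else mbf G b rest A rem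

lemma mbf_leaves (d M : ℕ) (l : List (Fin d)) (rem : ℕ) :
    mbf (completeBipartiteGraph (Fin 1) (Fin d))
        (Sum.elim (fun _ => 1) (fun _ => M))
        (l.map Sum.inr) [Sum.inl 0] rem = [Sum.inl 0] := by
  induction l generalizing rem with
  | nil => simp [mbf]
  | cons a t ih =>
    rw [List.map_cons, mbf]
    split
    · rfl
    · rw [if_neg, ih]
      push_neg
      exact ⟨Sum.inl 0, by simp⟩

/-- Unboundedness of the Maximum Weight-Budget Ratio First heuristic: on the star
`K_{1,d}` with center weight `1`, budget `1` and leaf weights `M/d`, budgets `M`,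
with total budget `B = dM`, the greedy heuristic processing vertices in order of
non-increasing weight-budget ratio (center first, ratio `1 ≥ 1/d`) selects only
the center, returning weight `1`, while the optimum `B`-budgeted independent set
has weight `M`. -/
theorem stmt_6 (d M : ℕ) (hd : 1 ≤ d) (hM : 1 ≤ M) :
    mbf (completeBipartiteGraph (Fin 1) (Fin d))
        (Sum.elim (fun _ => 1) (fun _ => M))
        (Sum.inl 0 :: (List.finRange d).map Sum.inr) [] (d * M)
      = [Sum.inl 0] ∧
    (∑ v ∈ (mbf (completeBipartiteGraph (Fin 1) (Fin d))
        (Sum.elim (fun _ => 1) (fun _ => M))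
        (Sum.inl 0 :: (List.finRange d).map Sum.inr) [] (d * M)).toFinset,
      Sum.elim (fun _ => (1 : ℝ)) (fun _ => (M : ℝ) / d) v) = 1 ∧
    IsGreatest {x : ℝ | ∃ S : Finset (Fin 1 ⊕ Fin d),
        (completeBipartiteGraph (Fin 1) (Fin d)).IsIndepSet' ↑S ∧
        ∑ v ∈ S, Sum.elim (fun _ => 1) (fun _ => M) v ≤ d * M ∧
        x = ∑ v ∈ S, Sum.elim (fun _ => (1 : ℝ)) (fun _ => (M : ℝ) / d) v}
      (M : ℝ) := by
  have hd0 : (0 : ℝ) < d := by positivity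
  have hrun : mbf (completeBipartiteGraph (Fin 1) (Fin d))
      (Sum.elim (fun _ => 1) (fun _ => M))
      (Sum.inl 0 :: (List.finRange d).map Sum.inr) [] (d * M) = [Sum.inl 0] := by
    rw [mbf, if_neg (by simp only [Sum.elim_inl]; exact Nat.not_lt.mpr (Nat.one_le_iff_ne_zero.mpr (by positivity))), if_pos (by simp)]
    exact mbf_leaves d M _ _
  refine ⟨hrun, by rw [hrun]; simp, ?_, ?_⟩
  · -- membership: all leaves
    refine ⟨(Finset.univ : Finset (Fin d)).map ⟨Sum.inr, Sum.inr_injective⟩, ?_, ?_, ?_⟩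
    · intro u hu v hv
      simp only [Finset.coe_map, Set.mem_image, Finset.mem_coe] at hu hv
      obtain ⟨a, -, rfl⟩ := hu
      obtain ⟨b, -, rfl⟩ := hv
      simp
    · rw [Finset.sum_map]
      simp [mul_comm]
    · rw [Finset.sum_map]
      simp only [Function.Embedding.coeFn_mk, Sum.elim_inr, Finset.sum_const,
        Finset.card_univ, Fintype.card_fin, nsmul_eq_mul]
      field_simp
  · -- upper bound
    rintro x ⟨S, hind, hb, rfl⟩
    by_cases hc : Sum.inl (0 : Fin 1) ∈ S
    · have hsub : S ⊆ {Sum.inl 0} := by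
        intro v hv
        rcases v with a | b
        · simp [Subsingleton.elim a 0]
        · exact absurd (hind _ hc _ hv) (by simp)
      calc ∑ v ∈ S, Sum.elim (fun _ => (1:ℝ)) (fun _ => (M:ℝ)/d) v
          ≤ ∑ v ∈ ({Sum.inl 0} : Finset (Fin 1 ⊕ Fin d)),
              Sum.elim (fun _ => (1:ℝ)) (fun _ => (M:ℝ)/d) v := by
            apply Finset.sum_le_sum_of_subset_of_nonneg hsub
            intro v _ _
            rcases v with a | b <;> simp <;> positivity
        _ = 1 := by simp
        _ ≤ M := by exact_mod_cast hM
    · have hval : ∀ v ∈ S, Sum.elim (fun _ => (1:ℝ)) (fun _ => (M:ℝ)/d) v = (M:ℝ)/d := by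
        intro v hv
        rcases v with a | b
        · exact absurd (Subsingleton.elim a 0 ▸ hv) hc
        · rfl
      have hbval : ∀ v ∈ S, Sum.elim (fun _ => 1) (fun _ => M) v = M := by
        intro v hv
        rcases v with a | b
        · exact absurd (Subsingleton.elim a 0 ▸ hv) hc
        · rfl
      rw [Finset.sum_congr rfl hval, Finset.sum_const, nsmul_eq_mul]
      rw [Finset.sum_congr rfl hbval, Finset.sum_const, smul_eq_mul] at hb
      have hcard : S.card ≤ d := by
        by_contra h
        push_neg at h
        exact absurd hb (by nlinarith)
      calc (S.card : ℝ) * ((M:ℝ)/d) ≤ (d : ℝ) * ((M:ℝ)/d) := by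
            apply mul_le_mul_of_nonneg_right (by exact_mod_cast hcard); positivity
        _ = M := by field_simp
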